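/- Let α > 2 be a natural number, ω* = 1/(α+1), and M(ω) the one-dimensional solitary wave mass. Then M is strictly convex on (0, ω*), i.e., M''(ω) > 0 for all ω ∈ (0, ω*). -/

import Mathlib

open Real MeasureTheory Set

set_option maxHeartbeats 1000000

lemma aux_integrable {p q c : ℝ} (hp : 0 < p) (hq : (1/2:ℝ) ≤ q) (hc : 0 < c) :
    IntegrableOn (fun z : ℝ => (1 + z^2) ^ (-p) * (c + z^2) ^ (-q)) (Set.Ioi 0) := by
  have hcont : Continuous fun z : ℝ => (1 + z^2) ^ (-p) * (c + z^2) ^ (-q) := by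
    apply Continuous.mul
    · exact Continuous.rpow_const (by continuity) fun z => Or.inl (by positivity)
    · exact Continuous.rpow_const (by continuity) fun z => Or.inl (by positivity)
  have h1 : IntegrableOn (fun z : ℝ => (1 + z^2) ^ (-p) * (c + z^2) ^ (-q)) (Set.Ioc 0 1) :=
    (hcont.integrableOn_Icc (a := 0) (b := 1)).mono_set Ioc_subset_Icc_self
  have h2 : IntegrableOn (fun z : ℝ => (1 + z^2) ^ (-p) * (c + z^2) ^ (-q)) (Set.Ioi 1) := by
    have hbint : IntegrableOn (fun t : ℝ => t ^ (-(2*(p+q)))) (Set.Ioi 1) :=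
      integrableOn_Ioi_rpow_of_lt (by linarith) one_pos
    refine Integrable.mono' hbint hcont.aestronglyMeasurable.restrict ?_
    filter_upwards [ae_restrict_mem measurableSet_Ioi] with z hz
    have hz0 : (0:ℝ) < z := lt_trans one_pos hz
    have hz2 : (0:ℝ) < z^2 := by positivity
    have e1 : (1 + z^2) ^ (-p) ≤ (z^2) ^ (-p) :=
      Real.rpow_le_rpow_of_nonpos hz2 (by linarith) (by linarith)
    have e2 : (c + z^2) ^ (-q) ≤ (z^2) ^ (-q) :=
      Real.rpow_le_rpow_of_nonpos hz2 (by linarith) (by linarith)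
    have hnn : (0:ℝ) ≤ (1 + z^2) ^ (-p) * (c + z^2) ^ (-q) := by positivity
    rw [Real.norm_eq_abs, abs_of_nonneg hnn]
    have e3 : (z^2) ^ (-p) * (z^2) ^ (-q) = z ^ (-(2*(p+q))) := by
      rw [← Real.rpow_natCast z 2, ← Real.rpow_mul hz0.le, ← Real.rpow_mul hz0.le,
        ← Real.rpow_add hz0]
      norm_num
      ring_nf
    calc (1 + z^2) ^ (-p) * (c + z^2) ^ (-q) ≤ (z^2) ^ (-p) * (z^2) ^ (-q) := by
          apply mul_le_mul e1 e2 (by positivity) (by positivity)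
      _ = z ^ (-(2*(p+q))) := e3
  have : Set.Ioi (0:ℝ) = Set.Ioc 0 1 ∪ Set.Ioi 1 := (Ioc_union_Ioi_eq_Ioi zero_le_one).symm
  rw [this]
  exact h1.union h2

lemma aux_cont {p q x : ℝ} (hx : 0 < x) :
    Continuous (fun z : ℝ => (1 + z^2) ^ (-p) * (x + z^2) ^ (-q)) := by
  apply Continuous.mul
  · exact Continuous.rpow_const (by continuity) fun z => Or.inl (by positivity)
  · exact Continuous.rpow_const (by continuity) fun z => Or.inl (by positivity)

lemma aux_meas {p q x : ℝ} (hx : 0 < x) :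
    AEStronglyMeasurable (fun z : ℝ => (1 + z^2) ^ (-p) * (x + z^2) ^ (-q))
      (volume.restrict (Set.Ioi 0)) :=
  (aux_cont hx).aestronglyMeasurable.restrict

lemma aux_deriv {p q c : ℝ} (hp : 0 < p) (hq : (1/2:ℝ) ≤ q) (hc : 0 < c) :
    HasDerivAt (fun c : ℝ => ∫ z in Set.Ioi (0:ℝ), (1 + z^2) ^ (-p) * (c + z^2) ^ (-q))
      (-q * ∫ z in Set.Ioi (0:ℝ), (1 + z^2) ^ (-p) * (c + z^2) ^ (-(q+1))) c := by
  have key := hasDerivAt_integral_of_dominated_loc_of_deriv_le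
    (F := fun (x : ℝ) (z : ℝ) => (1 + z^2) ^ (-p) * (x + z^2) ^ (-q))
    (F' := fun (x : ℝ) (z : ℝ) => -q * ((1 + z^2) ^ (-p) * (x + z^2) ^ (-(q+1))))
    (μ := volume.restrict (Set.Ioi 0)) (x₀ := c)
    (bound := fun z => q * ((1 + z^2) ^ (-p) * (c/2 + z^2) ^ (-(q+1))))
    (Metric.ball_mem_nhds c (half_pos hc))
    ((eventually_gt_nhds hc).mono fun x hx => aux_meas (p := p) (q := q) hx)
    (aux_integrable hp hq hc)
    ((aux_meas (p := p) (q := q+1) hc).const_mul (-q))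
    ?_ ?_ ?_
  · have := key.2
    rwa [MeasureTheory.integral_const_mul] at this
  · -- bound
    refine Filter.Eventually.of_forall fun z => fun x hx => ?_
    have hx2 : c/2 < x := by
      rw [Metric.mem_ball, Real.dist_eq, abs_sub_lt_iff] at hx
      linarith [hx.2]
    have hxz : (0:ℝ) < x + z^2 := by nlinarith [sq_nonneg z]
    have hcz : (0:ℝ) < c/2 + z^2 := by positivity
    have e1 : (x + z^2) ^ (-(q+1)) ≤ (c/2 + z^2) ^ (-(q+1)) :=
      Real.rpow_le_rpow_of_nonpos hcz (by linarith) (by linarith)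
    have hnn : (0:ℝ) ≤ (1 + z^2) ^ (-p) * (x + z^2) ^ (-(q+1)) := by positivity
    rw [norm_mul, Real.norm_eq_abs, Real.norm_eq_abs, abs_of_nonneg hnn,
      abs_of_nonpos (by linarith : -q ≤ 0)]
    have hq0 : (0:ℝ) ≤ q := by linarith
    calc - -q * ((1 + z^2) ^ (-p) * (x + z^2) ^ (-(q+1)))
        = q * ((1 + z^2) ^ (-p) * (x + z^2) ^ (-(q+1))) := by ring
      _ ≤ q * ((1 + z^2) ^ (-p) * (c/2 + z^2) ^ (-(q+1))) := by
          apply mul_le_mul_of_nonneg_left _ hq0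
          exact mul_le_mul_of_nonneg_left e1 (by positivity)
  · -- bound integrable
    exact (aux_integrable hp (by linarith : (1/2:ℝ) ≤ q+1) (half_pos hc)).const_mul q
  · -- differentiability
    refine Filter.Eventually.of_forall fun z => fun x hx => ?_
    have hx2 : c/2 < x := by
      rw [Metric.mem_ball, Real.dist_eq, abs_sub_lt_iff] at hx
      linarith [hx.2]
    have hxz : (0:ℝ) < x + z^2 := by nlinarith [sq_nonneg z]
    have h0 : HasDerivAt (fun x : ℝ => x + z^2) 1 x := (hasDerivAt_id x).add_const _
    have h1 := (h0.rpow_const (p := -q) (Or.inl (ne_of_gt hxz))).const_mul ((1 + z^2) ^ (-p))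
    refine h1.congr_deriv ?_
    rw [show -q - 1 = -(q+1) by ring]
    ring

lemma aux_quad {a s A : ℝ} (ha : a < 0) (hA : 0 < A) :
    0 < a*(a-1) * A^2 + a*s*A + 3/4 * s^2 := by
  nlinarith [sq_nonneg (3*s + 2*a*A), mul_pos (mul_pos_of_neg_of_neg ha
    (show 2*a-3 < 0 by linarith)) (mul_pos hA hA)]

theorem stmt15 (α : ℕ) (hα : 2 < α) (M : ℝ → ℝ)
    (hM : ∀ ω : ℝ, M ω =
      (2 / (α : ℝ)) * ω ^ (1 / (α : ℝ) - 1 / 2) * (1 / ((α : ℝ) + 1)) ^ (-(1 / (α : ℝ))) *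
        ∫ z in Set.Ioi (0 : ℝ),
          (1 + z ^ 2) ^ (-(1 / (α : ℝ))) *
            ((1 - ω / (1 / ((α : ℝ) + 1))) + z ^ 2) ^ (-(1 / 2 : ℝ))) :
    StrictConvexOn ℝ (Set.Ioo (0 : ℝ) (1 / ((α : ℝ) + 1))) M ∧
      ∀ ω ∈ Set.Ioo (0 : ℝ) (1 / ((α : ℝ) + 1)), 0 < deriv (deriv M) ω := by
  have hα3 : (3:ℝ) ≤ (α:ℝ) := by exact_mod_cast hα
  have hαpos : (0:ℝ) < (α:ℝ) := by linarith
  set p : ℝ := 1/(α:ℝ) with hpdef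
  set a : ℝ := p - 1/2 with hadef
  set b : ℝ := (α:ℝ)+1 with hbdef
  have hp : 0 < p := by positivity
  have hp3 : p ≤ 1/3 := by
    rw [hpdef, div_le_div_iff₀ hαpos (by norm_num)]; linarith
  have ha0 : a < 0 := by rw [hadef]; linarith
  have ha1 : -(1/2) < a := by rw [hadef]; linarith
  have hb : 0 < b := by rw [hbdef]; linarith
  set K : ℝ := (2/(α:ℝ)) * (1/b) ^ (-p) with hKdef
  have hK : 0 < K := by
    apply mul_pos (by positivity) (Real.rpow_pos_of_pos (by positivity) _)
  set J : ℝ → ℝ → ℝ := fun q c => ∫ z in Set.Ioi (0:ℝ), (1+z^2)^(-p) * (c+z^2)^(-q)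
    with hJdef
  have hMeq : M = fun ω => K * (ω ^ a * J (1/2) (1 - b*ω)) := by
    funext ω
    rw [hM ω, show (1:ℝ) - ω/(1/b) = 1 - b*ω from by rw [div_div_eq_mul_div, div_one]; ring]
    simp only [hJdef, hKdef]
    ring
  -- derivative of J in c
  have hJd : ∀ q : ℝ, (1/2:ℝ) ≤ q → ∀ c : ℝ, 0 < c →
      HasDerivAt (J q) (-q * J (q+1) c) c := by
    intro q hq c hc
    simp only [hJdef]
    exact aux_deriv hp hq hc
  -- chain rule through c = 1 - b ω
  have hcomp : ∀ q : ℝ, (1/2:ℝ) ≤ q → ∀ ω : ℝ, ω < 1/b →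
      HasDerivAt (fun ω => J q (1 - b*ω)) (q * b * J (q+1) (1 - b*ω)) ω := by
    intro q hq ω hω
    have hc : 0 < 1 - b*ω := by
      have h1 : ω * b < 1 := (lt_div_iff₀ hb).mp hω
      nlinarith
    have hlin : HasDerivAt (fun ω : ℝ => 1 - b*ω) (-b) ω := by
      simpa using ((hasDerivAt_id ω).const_mul b).const_sub 1
    have H := (hJd q hq _ hc).comp ω hlin
    refine H.congr_deriv ?_
    ring
  set M1 : ℝ → ℝ := fun ω =>
    K * (a * ω^(a-1) * J (1/2) (1 - b*ω) + ω^a * (1/2 * b * J (3/2) (1 - b*ω)))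
    with hM1def
  set M2 : ℝ → ℝ := fun ω =>
    K * (a*(a-1) * ω^(a-2) * J (1/2) (1 - b*ω) + a*b * ω^(a-1) * J (3/2) (1 - b*ω)
      + 3/4 * b^2 * ω^a * J (5/2) (1 - b*ω)) with hM2def
  have hM1d : ∀ ω ∈ Set.Ioo (0:ℝ) (1/b), HasDerivAt M (M1 ω) ω := by
    intro ω hω
    rw [hMeq]
    have h1 : HasDerivAt (fun ω : ℝ => ω^a) (a * ω^(a-1)) ω :=
      Real.hasDerivAt_rpow_const (Or.inl (ne_of_gt hω.1))
    have h2 : HasDerivAt (fun ω => J (1/2) (1 - b*ω)) (1/2 * b * J (3/2) (1 - b*ω)) ω := by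
      have h := hcomp (1/2) le_rfl ω hω.2
      norm_num only at h
      exact h
    have H := (h1.mul h2).const_mul K
    simp only [hM1def]
    exact H
  have hM2d : ∀ ω ∈ Set.Ioo (0:ℝ) (1/b), HasDerivAt M1 (M2 ω) ω := by
    intro ω hω
    have h1 : HasDerivAt (fun ω : ℝ => ω^(a-1)) ((a-1) * ω^(a-2)) ω := by
      have := Real.hasDerivAt_rpow_const (x := ω) (p := a-1) (Or.inl (ne_of_gt hω.1))
      rw [show a - 1 - 1 = a - 2 by ring] at this
      exact this
    have h1' : HasDerivAt (fun ω : ℝ => ω^a) (a * ω^(a-1)) ω :=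
      Real.hasDerivAt_rpow_const (Or.inl (ne_of_gt hω.1))
    have h2 : HasDerivAt (fun ω => J (1/2) (1 - b*ω)) (1/2 * b * J (3/2) (1 - b*ω)) ω := by
      have h := hcomp (1/2) le_rfl ω hω.2
      norm_num only at h
      exact h
    have h3 : HasDerivAt (fun ω => J (3/2) (1 - b*ω)) (3/2 * b * J (5/2) (1 - b*ω)) ω := by
      have h := hcomp (3/2) (by norm_num) ω hω.2
      norm_num only at h
      exact h
    have H := (((h1.const_mul a).mul h2).add (h1'.mul (h3.const_mul (1/2 * b)))).const_mul K
    rw [hM1def]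
    have hval : M2 ω = K * ((a * ((a-1) * ω^(a-2)) * J (1/2) (1 - b*ω)
        + a * ω^(a-1) * (1/2 * b * J (3/2) (1 - b*ω)))
      + (a * ω^(a-1) * (1/2 * b * J (3/2) (1 - b*ω))
        + ω^a * (1/2 * b * (3/2 * b * J (5/2) (1 - b*ω))))) := by
      simp only [hM2def]; ring
    rw [hval]
    exact H
  -- second derivative positivity
  have hpos : ∀ ω ∈ Set.Ioo (0:ℝ) (1/b), 0 < M2 ω := by
    intro ω hω
    obtain ⟨hω1, hω2⟩ := hω
    have hc : 0 < 1 - b*ω := by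
      have h1 : ω * b < 1 := (lt_div_iff₀ hb).mp hω2
      nlinarith
    set c : ℝ := 1 - b*ω with hcdef
    set s : ℝ := b*ω with hsdef
    -- rewrite M2 as K ω^(a-2) T
    have e1 : ω^(a-1) = ω^(a-2) * ω := by
      rw [← Real.rpow_add_one (ne_of_gt hω1) (a-2)]
      congr 1; ring
    have e2 : ω^a = ω^(a-2) * ω^2 := by
      rw [← Real.rpow_natCast ω 2, ← Real.rpow_add hω1]
      congr 1; push_cast; ring
    set T : ℝ := a*(a-1) * J (1/2) c + a*s * J (3/2) c + 3/4 * s^2 * J (5/2) c with hTdef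
    have hM2T : M2 ω = K * ω^(a-2) * T := by
      simp only [hM2def, hTdef, hcdef, hsdef, e1, e2]
      ring
    -- integrability
    have hi1 := aux_integrable (q := 1/2) hp le_rfl hc
    have hi3 := aux_integrable (q := 3/2) hp (by norm_num) hc
    have hi5 := aux_integrable (q := 5/2) hp (by norm_num) hc
    -- T as a single integral
    set g : ℝ → ℝ := fun z =>
      a*(a-1) * ((1+z^2)^(-p) * (c+z^2)^(-(1/2:ℝ)))
      + (a*s * ((1+z^2)^(-p) * (c+z^2)^(-(3/2:ℝ)))
        + 3/4 * s^2 * ((1+z^2)^(-p) * (c+z^2)^(-(5/2:ℝ)))) with hgdef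
    have hgint : IntegrableOn g (Set.Ioi 0) :=
      (hi1.const_mul _).add ((hi3.const_mul _).add (hi5.const_mul _))
    have ig1 : Integrable (fun z : ℝ =>
        a*(a-1) * ((1+z^2)^(-p) * (c+z^2)^(-(1/2:ℝ)))) (volume.restrict (Set.Ioi 0)) :=
      hi1.const_mul _
    have ig3 : Integrable (fun z : ℝ =>
        a*s * ((1+z^2)^(-p) * (c+z^2)^(-(3/2:ℝ)))) (volume.restrict (Set.Ioi 0)) :=
      hi3.const_mul _
    have ig5 : Integrable (fun z : ℝ =>
        3/4 * s^2 * ((1+z^2)^(-p) * (c+z^2)^(-(5/2:ℝ)))) (volume.restrict (Set.Ioi 0)) :=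
      hi5.const_mul _
    have ig35 : Integrable (fun z : ℝ =>
        a*s * ((1+z^2)^(-p) * (c+z^2)^(-(3/2:ℝ)))
          + 3/4 * s^2 * ((1+z^2)^(-p) * (c+z^2)^(-(5/2:ℝ)))) (volume.restrict (Set.Ioi 0)) :=
      ig3.add ig5
    have hT : T = ∫ z in Set.Ioi (0:ℝ), g z := by
      simp only [hgdef]
      rw [MeasureTheory.integral_add ig1 ig35, MeasureTheory.integral_add ig3 ig5,
        MeasureTheory.integral_const_mul, MeasureTheory.integral_const_mul,
        MeasureTheory.integral_const_mul]
      simp only [hTdef, hJdef]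
      ring
    -- pointwise positivity of g
    have hgpos : ∀ z : ℝ, 0 < g z := by
      intro z
      have hA : 0 < c + z^2 := by positivity
      have hP : 0 < (1+z^2)^(-p) := Real.rpow_pos_of_pos (by positivity) _
      have hW : 0 < (c+z^2)^(-(1/2:ℝ)) := Real.rpow_pos_of_pos hA _
      have h32 : (c+z^2)^(-(3/2:ℝ)) = (c+z^2)^(-(1/2:ℝ)) / (c+z^2) := by
        rw [show -(3/2:ℝ) = -(1/2) - 1 by norm_num, Real.rpow_sub_one (ne_of_gt hA)]
      have h52 : (c+z^2)^(-(5/2:ℝ)) = (c+z^2)^(-(1/2:ℝ)) / (c+z^2) / (c+z^2) := by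
        rw [show -(5/2:ℝ) = -(1/2) - 1 - 1 by norm_num, Real.rpow_sub_one (ne_of_gt hA),
          Real.rpow_sub_one (ne_of_gt hA)]
      have hquad : 0 < a*(a-1) * (c+z^2)^2 + a*s*(c+z^2) + 3/4 * s^2 := aux_quad ha0 hA
      have hge : g z = (1+z^2)^(-p) * (c+z^2)^(-(1/2:ℝ)) / (c+z^2)^2
          * (a*(a-1) * (c+z^2)^2 + a*s*(c+z^2) + 3/4 * s^2) := by
        simp only [hgdef, h32, h52]
        field_simp
        ring
      rw [hge]
      positivity
    have hTpos : 0 < T := by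
      rw [hT]
      rw [MeasureTheory.setIntegral_pos_iff_support_of_nonneg_ae
        (Filter.Eventually.of_forall fun z => (hgpos z).le) hgint]
      have hsub : Set.Ioi (0:ℝ) ⊆ Function.support g ∩ Set.Ioi 0 :=
        fun z hz => ⟨ne_of_gt (hgpos z), hz⟩
      refine lt_of_lt_of_le ?_ (measure_mono hsub)
      simp [Real.volume_Ioi]
    rw [hM2T]
    exact mul_pos (mul_pos hK (Real.rpow_pos_of_pos hω1 _)) hTpos
  have hderiv2 : ∀ ω ∈ Set.Ioo (0:ℝ) (1/b), deriv (deriv M) ω = M2 ω := by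
    intro ω hω
    have h1 : deriv M =ᶠ[nhds ω] M1 := by
      filter_upwards [isOpen_Ioo.mem_nhds hω] with x hx
      exact (hM1d x hx).deriv
    rw [Filter.EventuallyEq.deriv_eq h1]
    exact (hM2d ω hω).deriv
  constructor
  · apply strictConvexOn_of_deriv2_pos (convex_Ioo _ _)
    · intro x hx
      exact (hM1d x hx).differentiableAt.continuousAt.continuousWithinAt
    · intro x hx
      rw [interior_Ioo] at hx
      show 0 < deriv (deriv M) x
      rw [hderiv2 x hx]
      exact hpos x hx
  · intro ω hω
    rw [hderiv2 ω hω]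
    exact hpos ω hω
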